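/- arXiv:1201.5703 — 2 statements merged into one kernel-verified Lean document; each statement's English description precedes it below -/
import Mathlib

section
/- For all positive integers p and q, the identity ∑_{c=1}^{p} c · C(p+q, p-c) · p^{p-c} · q^{q+c} = (pq/(p+q)) · C(p+q, q) · p^p · q^q holds. -/
lemma aux_sum (p q : ℕ) : ∀ m, m < p →
    ∑ k ∈ Finset.range (m + 1),
        ((p : ℚ) - k) * ((p + q).choose k : ℚ) * (p : ℚ) ^ k * (q : ℚ) ^ (p + q - k)
      = ((p + q - 1).choose m : ℚ) * (p : ℚ) ^ (m + 1) * (q : ℚ) ^ (p + q - m) := by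
  intro m
  induction m with
  | zero => intro _; simp
  | succ m ih =>
    intro hm
    rw [Finset.sum_range_succ, ih (by omega)]
    have h1 : (((p + q).choose (m + 1) : ℕ) : ℚ)
        = ((p + q - 1).choose m : ℚ) + ((p + q - 1).choose (m + 1) : ℚ) := by
      have : p + q = (p + q - 1) + 1 := by omega
      rw [this, Nat.choose_succ_succ]
      push_cast; ring
    have h2 : ((p + q - 1).choose (m + 1) : ℚ) * ((m : ℚ) + 1)
        = ((p + q - 1).choose m : ℚ) * ((p : ℚ) + q - 1 - m) := by
      have hn := Nat.choose_succ_right_eq (p + q - 1) m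
      have hc : (((p + q - 1) - m : ℕ) : ℚ) = (p : ℚ) + q - 1 - m := by
        have hle : m ≤ p + q - 1 := by omega
        have h1q : 1 ≤ p + q := by omega
        push_cast [Nat.cast_sub hle, Nat.cast_sub h1q]
        ring
      calc ((p + q - 1).choose (m + 1) : ℚ) * ((m : ℚ) + 1)
          = (((p + q - 1).choose (m + 1) * (m + 1) : ℕ) : ℚ) := by push_cast; ring
        _ = (((p + q - 1).choose m * ((p + q - 1) - m) : ℕ) : ℚ) := by rw [hn]
        _ = ((p + q - 1).choose m : ℚ) * ((p : ℚ) + q - 1 - m) := by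
            push_cast [hc]; ring
    have h3 : (q : ℚ) ^ (p + q - m) = (q : ℚ) ^ (p + q - (m + 1)) * q := by
      have : p + q - m = (p + q - (m + 1)) + 1 := by omega
      rw [this, pow_succ]
    rw [h3]
    push_cast
    linear_combination (((p : ℚ) - (m + 1)) * (p : ℚ) ^ (m + 1) * (q : ℚ) ^ (p + q - (m + 1))) * h1
      - ((p : ℚ) ^ (m + 1) * (q : ℚ) ^ (p + q - (m + 1))) * h2

/-- Goulden–Jackson identity: `∑_{c=1}^{p} c·C(p+q,p-c)·p^{p-c}·q^{q+c}
    = (pq/(p+q))·C(p+q,q)·p^p·q^q`. -/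
theorem stmt0 (p q : ℕ) (hp : 0 < p) (hq : 0 < q) :
    ∑ c ∈ Finset.Icc 1 p,
        (c : ℚ) * ((p + q).choose (p - c) : ℚ) * (p : ℚ) ^ (p - c) * (q : ℚ) ^ (q + c)
      = ((p : ℚ) * q / (p + q)) * ((p + q).choose q : ℚ) * (p : ℚ) ^ p * (q : ℚ) ^ q := by
  have hsum : ∑ c ∈ Finset.Icc 1 p,
        (c : ℚ) * ((p + q).choose (p - c) : ℚ) * (p : ℚ) ^ (p - c) * (q : ℚ) ^ (q + c)
      = ∑ k ∈ Finset.range p,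
        ((p : ℚ) - k) * ((p + q).choose k : ℚ) * (p : ℚ) ^ k * (q : ℚ) ^ (p + q - k) := by
    apply Finset.sum_bij' (fun c _ => p - c) (fun k _ => p - k)
    · intro a ha
      simp only [Finset.mem_Icc] at ha
      simp only [Finset.mem_range]
      omega
    · intro a ha
      simp only [Finset.mem_range] at ha
      simp only [Finset.mem_Icc]
      omega
    · intro a ha
      simp only [Finset.mem_Icc] at ha
      omega
    · intro a ha
      simp only [Finset.mem_range] at ha
      omega
    · intro a ha
      simp only [Finset.mem_Icc] at ha
      have h1 : ((a : ℚ)) = (p : ℚ) - (p - a : ℕ) := by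
        have : ((p - a : ℕ) : ℚ) = (p : ℚ) - a := by
          push_cast [Nat.cast_sub ha.2]; ring
        rw [this]; ring
      have h2 : q + a = p + q - (p - a) := by omega
      rw [h1, h2]
  rw [hsum]
  rw [show Finset.range p = Finset.range ((p - 1) + 1) by congr 1; omega]
  rw [aux_sum p q (p - 1) (by omega)]
  rw [show (p - 1) + 1 = p by omega, show p + q - (p - 1) = q + 1 by omega]
  have hcs : (p + q).choose q = (p + q).choose p := by
    rw [← Nat.choose_symm (Nat.le_add_right p q), Nat.add_sub_cancel_left]
  have hkey : (p + q) * ((p + q - 1).choose (p - 1)) = (p + q).choose p * p := by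
    have := Nat.add_one_mul_choose_eq (p + q - 1) (p - 1)
    rw [show p + q - 1 + 1 = p + q by omega, show p - 1 + 1 = p by omega] at this
    exact this
  have hkeyQ : ((p : ℚ) + q) * ((p + q - 1).choose (p - 1) : ℚ)
      = ((p + q).choose p : ℚ) * p := by exact_mod_cast hkey
  have hne : (p : ℚ) + q ≠ 0 := by positivity
  rw [hcs]
  field_simp
  linear_combination ((q : ℚ) ^ (q + 1)) * hkeyQ
end

section
/- For all positive integers p and q, the quantity C(p+q, q) · p^p · q^q + ∑_{c=1}^{p} 2c · C(p+q, p-c) · p^{p-c} · q^{q+c} equals C(p+q, q) · p^p · q^q · (p+q+2pq)/(p+q). -/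
open Finset

noncomputable def Gfun (p q k : ℕ) : ℚ :=
  2 * k * ((p + q).choose k : ℚ) * (p : ℚ) ^ k * (q : ℚ) ^ (p + q - k) * q / ((p : ℚ) + q)

theorem stmt1 (p q : ℕ) (hp : 0 < p) (hq : 0 < q) :
    ((p + q).choose q : ℚ) * (p : ℚ) ^ p * (q : ℚ) ^ q
      + ∑ c ∈ Finset.Icc 1 p,
          2 * (c : ℚ) * ((p + q).choose (p - c) : ℚ) * (p : ℚ) ^ (p - c) * (q : ℚ) ^ (q + c)
      = ((p + q).choose q : ℚ) * (p : ℚ) ^ p * (q : ℚ) ^ q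
          * (((p : ℚ) + q + 2 * p * q) / ((p : ℚ) + q)) := by
  have hn : ((p : ℚ) + q) ≠ 0 := by positivity
  have key : ∀ i ∈ range p,
      2 * ((1 + i : ℕ) : ℚ) * ((p + q).choose (p - (1 + i)) : ℚ) * (p : ℚ) ^ (p - (1 + i))
          * (q : ℚ) ^ (q + (1 + i))
        = Gfun p q (p - i) - Gfun p q (p - (i + 1)) := by
    intro i hi
    rw [mem_range] at hi
    set k := p - (i + 1) with hk
    have hk1 : p - i = k + 1 := by omega
    have hpik : p - (1 + i) = k := by omega
    have hc2 : ((1 + i : ℕ) : ℚ) = (p : ℚ) - k := by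
      rw [hk]; push_cast [Nat.cast_sub (by omega : i + 1 ≤ p)]; ring
    have hkle : k + 1 ≤ p + q := by omega
    have hqc : q + (1 + i) = p + q - k := by omega
    have hq1 : p + q - k = (p + q - (k + 1)) + 1 := by omega
    have hchoose : ((p + q).choose (k + 1) : ℚ) * (k + 1) = ((p + q).choose k : ℚ) * ((p + q : ℚ) - k) := by
      have := Nat.choose_succ_right_eq (p + q) k
      have hcast : ((p + q - k : ℕ) : ℚ) = (p + q : ℚ) - k := by
        push_cast [Nat.cast_sub (by omega : k ≤ p + q)]; ring
      calc ((p + q).choose (k + 1) : ℚ) * (k + 1)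
          = (((p + q).choose (k + 1) * (k + 1) : ℕ) : ℚ) := by push_cast; ring
        _ = (((p + q).choose k * (p + q - k) : ℕ) : ℚ) := by rw [this]
        _ = ((p + q).choose k : ℚ) * ((p + q : ℚ) - k) := by push_cast [hcast]; ring
    have hpk : ((p - k : ℕ) : ℚ) = (p : ℚ) - k := by
      push_cast [Nat.cast_sub (by omega : k ≤ p)]; ring
    rw [hpik, hqc, hc2, hk1]
    unfold Gfun
    rw [show p + q - k = (p + q - (k + 1)) + 1 from by omega, pow_succ]
    push_cast
    rw [div_sub_div_same, eq_div_iff hn]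
    linear_combination (-2 * (p : ℚ) ^ (k + 1) * (q : ℚ) ^ (p + q - (k + 1)) * q) * hchoose
  rw [show Finset.Icc 1 p = Finset.Ico 1 (p+1) by rfl, Finset.sum_Ico_eq_sum_range,
    Nat.add_sub_cancel, Finset.sum_congr rfl key,
    Finset.sum_range_sub' (fun i => Gfun p q (p - i)) p]
  have h0 : Gfun p q 0 = 0 := by unfold Gfun; simp
  have hsym : (p + q).choose p = (p + q).choose q := by
    rw [← Nat.choose_symm (Nat.le_add_left q p), Nat.add_sub_cancel]
  rw [Nat.sub_zero, Nat.sub_self, h0]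
  unfold Gfun
  rw [Nat.add_sub_cancel_left, hsym]
  field_simp
  ring
end
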